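/- The function f(u,v) = log(v/u) + (u−v)/v − c₂(u−v)², with c₂ = 1/(2(1−α)²) and u fixed in [α, 1−α], attains its minimum over v ∈ [α, 1−α] at v = u, where it equals 0; indeed ∂f/∂v = (v−u)(1 − 2c₂v²)/v² has the same sign as v−u on this interval. -/

import Mathlib

theorem min_of_f_at_u (α u : ℝ) (hα0 : 0 < α) (hα : α < 1/2)
    (hu : u ∈ Set.Icc α (1 - α)) :
    (fun v : ℝ => Real.log (v / u) + (u - v) / v
        - (1 / (2 * (1 - α)^2)) * (u - v)^2) u = 0 ∧
    (∀ v ∈ Set.Icc α (1 - α),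
      (0:ℝ) ≤ Real.log (v / u) + (u - v) / v
        - (1 / (2 * (1 - α)^2)) * (u - v)^2) ∧
    (∀ v ∈ Set.Icc α (1 - α),
      HasDerivAt (fun v : ℝ => Real.log (v / u) + (u - v) / v
          - (1 / (2 * (1 - α)^2)) * (u - v)^2)
        ((v - u) * (1 - 2 * (1 / (2 * (1 - α)^2)) * v^2) / v^2) v) := by
  have hα1 : (0:ℝ) < 1 - α := by linarith
  have hu0 : 0 < u := lt_of_lt_of_le hα0 hu.1
  set c : ℝ := 1 / (2 * (1 - α)^2) with hc
  set f : ℝ → ℝ := fun v : ℝ => Real.log (v / u) + (u - v) / v - c * (u - v)^2 with hf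
  have key : ∀ v ∈ Set.Icc α (1 - α),
      HasDerivAt f ((v - u) * (1 - 2 * c * v^2) / v^2) v := by
    intro v hv
    have hv0 : 0 < v := lt_of_lt_of_le hα0 hv.1
    have h1 : HasDerivAt (fun v : ℝ => Real.log (v / u)) (1 / v) v := by
      have hd : HasDerivAt (fun v : ℝ => v / u) (1 / u) v := by
        simpa using (hasDerivAt_id v).div_const u
      have hlog := (Real.hasDerivAt_log (by positivity : v / u ≠ 0)).comp v hd
      refine hlog.congr_deriv ?_
      field_simp
    have h2 : HasDerivAt (fun v : ℝ => (u - v) / v) (-u / v^2) v := by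
      have := ((hasDerivAt_const v u).sub (hasDerivAt_id v)).div (hasDerivAt_id v) hv0.ne'
      refine this.congr_deriv ?_
      simp only [Pi.sub_apply, id_eq]
      field_simp
      ring
    have h3 : HasDerivAt (fun v : ℝ => c * (u - v)^2) (-2 * c * (u - v)) v := by
      have := (((hasDerivAt_const v u).sub (hasDerivAt_id v)).pow 2).const_mul c
      refine this.congr_deriv ?_
      simp only [Pi.sub_apply, id_eq]
      ring
    have := (h1.add h2).sub h3
    refine this.congr_deriv ?_
    field_simp
    ring
  have hfu : f u = 0 := by
    simp only [hf, div_self hu0.ne', Real.log_one, sub_self, zero_div]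
    ring
  refine ⟨hfu, ?_, key⟩
  · -- nonnegativity via monotonicity
    have hderiv : ∀ v ∈ Set.Icc α (1 - α), DifferentiableAt ℝ f v :=
      fun v hv => (key v hv).differentiableAt
    have hcv : ∀ v ∈ Set.Icc α (1 - α),
        deriv f v = (v - u) * (1 - 2 * c * v^2) / v^2 :=
      fun v hv => (key v hv).deriv
    have hsign : ∀ v ∈ Set.Icc α (1 - α), 0 ≤ 1 - 2 * c * v^2 := by
      intro v hv
      have hv0 : 0 < v := lt_of_lt_of_le hα0 hv.1
      have hvle : v ≤ 1 - α := hv.2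
      have h2 : v^2 ≤ (1 - α)^2 := by nlinarith
      have : 2 * c * v^2 ≤ 1 := by
        rw [hc, show (2:ℝ) * (1/(2*(1-α)^2)) * v^2 = v^2/(1-α)^2 by field_simp,
          div_le_one (by positivity)]
        exact h2
      linarith
    have hanti : AntitoneOn f (Set.Icc α u) := by
      apply antitoneOn_of_deriv_nonpos (convex_Icc α u)
      · intro v hv
        exact (hderiv v ⟨hv.1, le_trans hv.2 hu.2⟩).continuousAt.continuousWithinAt
      · intro v hv
        rw [interior_Icc] at hv
        exact ((hderiv v ⟨hv.1.le, le_trans hv.2.le hu.2⟩)).differentiableWithinAt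
      · intro v hv
        rw [interior_Icc] at hv
        have hv' : v ∈ Set.Icc α (1 - α) := ⟨hv.1.le, le_trans hv.2.le hu.2⟩
        rw [hcv v hv']
        have hv0 : 0 < v := lt_of_lt_of_le hα0 hv.1.le
        apply div_nonpos_of_nonpos_of_nonneg
        · exact mul_nonpos_of_nonpos_of_nonneg (by linarith [hv.2]) (hsign v hv')
        · positivity
    have hmono : MonotoneOn f (Set.Icc u (1 - α)) := by
      apply monotoneOn_of_deriv_nonneg (convex_Icc u (1 - α))
      · intro v hv
        exact (hderiv v ⟨le_trans hu.1 hv.1, hv.2⟩).continuousAt.continuousWithinAt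
      · intro v hv
        rw [interior_Icc] at hv
        exact ((hderiv v ⟨le_trans hu.1 hv.1.le, hv.2.le⟩)).differentiableWithinAt
      · intro v hv
        rw [interior_Icc] at hv
        have hv' : v ∈ Set.Icc α (1 - α) := ⟨le_trans hu.1 hv.1.le, hv.2.le⟩
        rw [hcv v hv']
        have hv0 : 0 < v := lt_of_lt_of_le hα0 hv'.1
        apply div_nonneg
        · exact mul_nonneg (by linarith [hv.1]) (hsign v hv')
        · positivity
    intro v hv
    have : 0 ≤ f v := by
      rcases le_total v u with h | h
      · have := hanti ⟨hv.1, h⟩ ⟨hu.1, le_refl u⟩ h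
        rw [hfu] at this; exact this
      · have := hmono ⟨le_refl u, hu.2⟩ ⟨h, hv.2⟩ h
        rw [hfu] at this; exact this
    exact this
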